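/- arXiv:2209.15232 — 2 statements merged into one kernel-verified Lean document; each statement's English description precedes it below -/
import Mathlib

section
/- (Comparison principle I.) Let Ω ⊂ ℝⁿ be a bounded domain and suppose (A1)–(A2) hold. Let f₁, f₂ ∈ C(closure of Ω) with f₁ > f₂ everywhere, let v ∈ C(closure of Ω) be a viscosity subsolution of Φ(y,|Du|)F(D²u) = f₁(y) in Ω, and let w ∈ C(closure of Ω) ∩ C²(Ω) be a viscosity supersolution of Φ(y,|Du|)F(D²u) = f₂(y) in Ω. If v ≤ w on ∂Ω, then v ≤ w in Ω. -/
open Metric Set MeasureTheory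
open scoped RealInnerProductSpace NNReal

noncomputable section

abbrev En (n : ℕ) : Type := EuclideanSpace ℝ (Fin n)

/-- The Hessian matrix of `u` at `x`, via the second iterated Fréchet derivative. -/
def Hess {n : ℕ} (u : En n → ℝ) (x : En n) : Matrix (Fin n) (Fin n) ℝ :=
  fun i j => iteratedFDeriv ℝ 2 u x ![EuclideanSpace.single i 1, EuclideanSpace.single j 1]

/-- (A1): `F` is uniformly `(lam, Lam)`-elliptic. -/
def UniformlyElliptic (n : ℕ) (lam Lam : ℝ) (F : Matrix (Fin n) (Fin n) ℝ → ℝ) : Prop :=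
  ∀ M N : Matrix (Fin n) (Fin n) ℝ, M.IsSymm → N.IsSymm → N.PosSemidef →
    lam * N.trace ≤ F (M + N) - F M ∧ F (M + N) - F M ≤ Lam * N.trace

/-- Viscosity subsolution of `G (x, u x, Du, D²u) = 0` (in the sense `G ≥ 0` at test points). -/
def ViscSubOn {n : ℕ} (U : Set (En n))
    (G : En n → ℝ → En n → Matrix (Fin n) (Fin n) ℝ → ℝ) (u : En n → ℝ) : Prop :=
  ∀ φ : En n → ℝ, ContDiff ℝ 2 φ → ∀ x₀ ∈ U,
    IsLocalMaxOn (fun y => u y - φ y) U x₀ →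
    0 ≤ G x₀ (u x₀) (gradient φ x₀) (Hess φ x₀)

def ViscSupOn {n : ℕ} (U : Set (En n))
    (G : En n → ℝ → En n → Matrix (Fin n) (Fin n) ℝ → ℝ) (u : En n → ℝ) : Prop :=
  ∀ φ : En n → ℝ, ContDiff ℝ 2 φ → ∀ x₀ ∈ U,
    IsLocalMinOn (fun y => u y - φ y) U x₀ →
    G x₀ (u x₀) (gradient φ x₀) (Hess φ x₀) ≤ 0

def ViscSolOn {n : ℕ} (U : Set (En n))
    (G : En n → ℝ → En n → Matrix (Fin n) (Fin n) ℝ → ℝ) (u : En n → ℝ) : Prop :=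
  ViscSubOn U G u ∧ ViscSupOn U G u

/-- (A2): the structure conditions on the map `Φ`. -/
structure PhiStruct {n : ℕ} (Ω : Set (En n)) (Φ : En n → ℝ → ℝ)
    (iP sP L ν₀ ν₁ : ℝ) : Prop where
  iP_gt : (-1 : ℝ) < iP
  iP_le_sP : iP ≤ sP
  one_le_L : 1 ≤ L
  ν₀_pos : 0 < ν₀
  ν₀_le_ν₁ : ν₀ ≤ ν₁
  nonneg : ∀ x ∈ Ω, ∀ t : ℝ, 0 ≤ t → 0 ≤ Φ x t
  cont : ContinuousOn (fun p : En n × ℝ => Φ p.1 p.2) (Ω ×ˢ Ici (0 : ℝ))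
  almost_mono : ∀ x ∈ Ω, ∀ t₁ t₂ : ℝ, 0 < t₁ → t₁ ≤ t₂ →
    Φ x t₁ / t₁ ^ iP ≤ L * (Φ x t₂ / t₂ ^ iP)
  almost_anti : ∀ x ∈ Ω, ∀ t₁ t₂ : ℝ, 0 < t₁ → t₁ ≤ t₂ →
    Φ x t₂ / t₂ ^ sP ≤ L * (Φ x t₁ / t₁ ^ sP)
  lb : ∀ x ∈ Ω, ν₀ ≤ Φ x 1
  ub : ∀ x ∈ Ω, Φ x 1 ≤ ν₁

/-- last coordinate `y_n`. -/
def yLast {m : ℕ} (y : En (m + 1)) : ℝ := y (Fin.last m)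

/-- the first `n-1` coordinates `y'`. -/
def yPrime {m : ℕ} (y : En (m + 1)) : En m := WithLp.toLp 2 (fun i : Fin m => y i.castSucc)

/-- `B ∩ {y_n > φ(y')}`. -/
def flatDom {m : ℕ} (φb : En m → ℝ) (B : Set (En (m + 1))) : Set (En (m + 1)) :=
  {y ∈ B | φb (yPrime y) < yLast y}

/-- `B ∩ {y_n = φ(y')}`. -/
def flatBdy {m : ℕ} (φb : En m → ℝ) (B : Set (En (m + 1))) : Set (En (m + 1)) :=
  {y ∈ B | yLast y = φb (yPrime y)}

/-- A bounded `C^{1,1}` domain: near each boundary point, after a rigid motion,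
`Ω` is the region above the graph of a `C^{1,1}` function. -/
def IsC11Domain {m : ℕ} (Ω : Set (En (m + 1))) : Prop :=
  IsOpen Ω ∧ Bornology.IsBounded Ω ∧ IsConnected Ω ∧
  ∀ z ∈ frontier Ω, ∃ (R : En (m + 1) ≃ᵃⁱ[ℝ] En (m + 1)) (ρ : ℝ)
      (φb : En m → ℝ) (Kφ : ℝ≥0), 0 < ρ ∧ ContDiff ℝ 1 φb ∧
      LipschitzWith Kφ (fderiv ℝ φb) ∧
      ∀ y ∈ ball z ρ, (y ∈ Ω ↔ φb (yPrime (R y)) < yLast (R y))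

/-- `abar` is a Krylov–Safonov exponent for `(lam, Lam)`-elliptic operators in dimension `m+1`. -/
def KSExponent (m : ℕ) (lam Lam abar : ℝ) : Prop :=
  0 < abar ∧ abar < 1 ∧
  ∀ F : Matrix (Fin (m + 1)) (Fin (m + 1)) ℝ → ℝ, Continuous F →
    UniformlyElliptic (m + 1) lam Lam F → F 0 = 0 →
    ∀ u : En (m + 1) → ℝ, ContinuousOn u (ball 0 1) →
      ViscSolOn (ball 0 1) (fun _ _ _ M => F M) u →
      ∃ (Du : En (m + 1) → En (m + 1)) (C : ℝ),
        (∀ x ∈ ball (0 : En (m + 1)) (1 / 2), HasGradientAt u (Du x) x) ∧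
        ∀ x ∈ ball (0 : En (m + 1)) (1 / 2), ∀ y ∈ ball (0 : En (m + 1)) (1 / 2),
          ‖Du x - Du y‖ ≤ C * ‖x - y‖ ^ abar

/-- `L^p` norm of `h` over the set `s`. -/
def LnNorm {n : ℕ} (s : Set (En n)) (h : En n → ℝ) (p : ℝ) : ℝ :=
  (∫ x in s, |h x| ^ p) ^ (1 / p)

/-- upper contact set `Γ⁺(v, Ω)`. -/
def UpperContact {n : ℕ} (Ω : Set (En n)) (v : En n → ℝ) : Set (En n) :=
  {x ∈ Ω | ∃ p : En n, ∀ y ∈ Ω, v y ≤ v x + ⟪p, y - x⟫}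

/-- Comparison principle I (Lemma 4.2). -/
theorem comparison_principle_I (m : ℕ) (hm : 1 ≤ m)
    (lam Lam iP sP L ν₀ ν₁ : ℝ) (hlam : 0 < lam) (hlL : lam ≤ Lam)
    (Ω : Set (En (m + 1))) (hΩo : IsOpen Ω) (hΩc : IsConnected Ω)
    (hΩb : Bornology.IsBounded Ω)
    (F : Matrix (Fin (m + 1)) (Fin (m + 1)) ℝ → ℝ)
    (hFc : Continuous F) (hFe : UniformlyElliptic (m + 1) lam Lam F) (hF0 : F 0 = 0)
    (Φ : En (m + 1) → ℝ → ℝ) (hΦ : PhiStruct Ω Φ iP sP L ν₀ ν₁)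
    (f₁ f₂ : En (m + 1) → ℝ)
    (hf₁ : ContinuousOn f₁ (closure Ω)) (hf₂ : ContinuousOn f₂ (closure Ω))
    (hff : ∀ x ∈ closure Ω, f₂ x < f₁ x)
    (v w : En (m + 1) → ℝ)
    (hv : ContinuousOn v (closure Ω)) (hw : ContinuousOn w (closure Ω))
    (hw2 : ContDiffOn ℝ 2 w Ω)
    (hvsub : ViscSubOn Ω (fun x _ p M => Φ x ‖p‖ * F M - f₁ x) v)
    (hwsup : ViscSupOn Ω (fun x _ p M => Φ x ‖p‖ * F M - f₂ x) w)
    (hbdry : ∀ x ∈ frontier Ω, v x ≤ w x) :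
    ∀ x ∈ Ω, v x ≤ w x := by
  intro x hx
  by_contra hcon
  push_neg at hcon
  -- max of v - w on closure Ω
  have hKc : IsCompact (closure Ω) := hΩb.isCompact_closure
  have hne : (closure Ω).Nonempty := ⟨x, subset_closure hx⟩
  obtain ⟨x₀, hx₀K, hmax⟩ :=
    hKc.exists_isMaxOn hne ((hv.sub hw).mono Subset.rfl)
  have hmax' : ∀ y ∈ closure Ω, v y - w y ≤ v x₀ - w x₀ := fun y hy => hmax hy
  have hpos : 0 < v x₀ - w x₀ :=
    lt_of_lt_of_le (by linarith) (hmax' x (subset_closure hx))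
  have hx₀ : x₀ ∈ Ω := by
    by_contra hx₀n
    have hfr : x₀ ∈ frontier Ω := by
      rw [frontier, hΩo.interior_eq]
      exact ⟨hx₀K, hx₀n⟩
    have := hbdry x₀ hfr
    linarith
  -- bump function
  obtain ⟨ε, hε, hball⟩ := Metric.nhds_basis_closedBall.mem_iff.1 (hΩo.mem_nhds hx₀)
  set f : ContDiffBump x₀ := ⟨ε / 2, ε, by positivity, by linarith⟩ with hf
  have htsupp : tsupport (f : En (m+1) → ℝ) ⊆ Ω := by
    rw [f.tsupport_eq]
    exact hball
  set φ : En (m + 1) → ℝ := fun y => f y * w y with hφdef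
  have hφ : ContDiff ℝ 2 φ := by
    rw [← contDiffOn_univ]
    apply contDiffOn_of_locally_contDiffOn
    intro y _
    by_cases hy : y ∈ Ω
    · exact ⟨Ω, hΩo, hy, ((f.contDiff.contDiffOn).mul hw2).mono (by simp)⟩
    · refine ⟨(tsupport (f : En (m+1) → ℝ))ᶜ, (isClosed_tsupport _).isOpen_compl,
        fun h => hy (htsupp h), ?_⟩
      apply (contDiffOn_const (c := (0:ℝ))).congr
      intro z hz
      have : f z = 0 := image_eq_zero_of_notMem_tsupport hz.2
      simp [hφdef, this]
  have hone : ∀ y ∈ ball x₀ (ε / 2), φ y = w y := by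
    intro y hy
    have : f y = 1 := f.one_of_mem_closedBall (ball_subset_closedBall hy)
    simp [hφdef, this]
  have hball2 : ball x₀ (ε / 2) ∈ nhdsWithin x₀ Ω :=
    mem_nhdsWithin_of_mem_nhds (ball_mem_nhds _ (by positivity : (0:ℝ) < ε/2))
  have hx₀ball : x₀ ∈ ball x₀ (ε / 2) := mem_ball_self (by positivity)
  have hφx₀ : φ x₀ = w x₀ := hone x₀ hx₀ball
  -- local max of v - φ on Ω at x₀
  have hlmax : IsLocalMaxOn (fun y => v y - φ y) Ω x₀ := by
    filter_upwards [hball2, self_mem_nhdsWithin] with y hy hyΩ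
    have := hmax' y (subset_closure hyΩ)
    simp only [hone y hy, hφx₀]
    linarith
  -- local min of w - φ on Ω at x₀
  have hlmin : IsLocalMinOn (fun y => w y - φ y) Ω x₀ := by
    filter_upwards [hball2, self_mem_nhdsWithin] with y hy hyΩ
    simp [hone y hy, hφx₀]
  have h1 := hvsub φ hφ x₀ hx₀ hlmax
  have h2 := hwsup φ hφ x₀ hx₀ hlmin
  have h3 := hff x₀ (subset_closure hx₀)
  simp only at h1 h2
  linarith
end
end

section
/- For all n×n real symmetric positive semidefinite matrices A and B, det(A)·det(B) ≤ (tr(AB)/n)^n. -/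
open Matrix Finset
open scoped MatrixOrder

lemma trace_eq_sum_eigenvalues' {n : ℕ} {C : Matrix (Fin n) (Fin n) ℝ}
    (hC : C.IsHermitian) : C.trace = ∑ i, hC.eigenvalues i := by
  conv_lhs => rw [hC.spectral_theorem, Unitary.conjStarAlgAut_apply]
  rw [Matrix.trace_mul_cycle]
  rw [show (star (hC.eigenvectorUnitary : Matrix (Fin n) (Fin n) ℝ)) *
      (hC.eigenvectorUnitary : Matrix (Fin n) (Fin n) ℝ) = 1 from
    (Matrix.mem_unitaryGroup_iff').mp hC.eigenvectorUnitary.2, one_mul,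
    Matrix.trace_diagonal]
  simp

lemma det_le_trace_div_pow {n : ℕ} (hn : 1 ≤ n) {C : Matrix (Fin n) (Fin n) ℝ}
    (hC : C.PosSemidef) : C.det ≤ (C.trace / n) ^ n := by
  have hnpos : (0:ℝ) < n := by exact_mod_cast hn
  have hz : ∀ i ∈ Finset.univ, 0 ≤ hC.1.eigenvalues i := fun i _ => hC.eigenvalues_nonneg i
  have hw : ∀ i ∈ (Finset.univ : Finset (Fin n)), (0:ℝ) ≤ (n:ℝ)⁻¹ :=
    fun _ _ => by positivity
  have hw' : ∑ _i ∈ (Finset.univ : Finset (Fin n)), (n:ℝ)⁻¹ = 1 := by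
    simp [Finset.card_univ, mul_inv_cancel₀ hnpos.ne']
  have key := Real.geom_mean_le_arith_mean_weighted Finset.univ (fun _ => (n:ℝ)⁻¹)
    hC.1.eigenvalues hw hw' hz
  have hdet : C.det = ∏ i, hC.1.eigenvalues i := by
    have := hC.1.det_eq_prod_eigenvalues
    exact_mod_cast this
  have htr : C.trace = ∑ i, hC.1.eigenvalues i := trace_eq_sum_eigenvalues' hC.1
  have hLHS : (∏ i, hC.1.eigenvalues i ^ ((n:ℝ)⁻¹)) ^ n = ∏ i, hC.1.eigenvalues i := by
    rw [← Real.rpow_natCast (∏ i, hC.1.eigenvalues i ^ ((n:ℝ)⁻¹)) n,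
      ← Real.finset_prod_rpow _ _ (fun i _ => Real.rpow_nonneg (hC.eigenvalues_nonneg i) _)]
    refine Finset.prod_congr rfl fun i _ => ?_
    rw [← Real.rpow_mul (hC.eigenvalues_nonneg i), inv_mul_cancel₀ hnpos.ne', Real.rpow_one]
  have hprodnonneg : 0 ≤ ∏ i, hC.1.eigenvalues i ^ ((n:ℝ)⁻¹) :=
    Finset.prod_nonneg fun i _ => Real.rpow_nonneg (hC.eigenvalues_nonneg i) _
  calc C.det = (∏ i, hC.1.eigenvalues i ^ ((n:ℝ)⁻¹)) ^ n := by rw [hLHS, hdet]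
    _ ≤ (∑ i, (n:ℝ)⁻¹ * hC.1.eigenvalues i) ^ n := pow_le_pow_left₀ hprodnonneg key n
    _ = (C.trace / n) ^ n := by
        rw [htr, ← Finset.mul_sum, div_eq_inv_mul]

/-- for `n × n` real symmetric positive semidefinite matrices `A` and `B`,
`det A * det B ≤ (tr (A * B) / n) ^ n`. -/
theorem det_mul_det_le_trace_mul_div_pow (n : ℕ) (hn : 1 ≤ n)
    (A B : Matrix (Fin n) (Fin n) ℝ) (hA : A.PosSemidef) (hB : B.PosSemidef) :
    A.det * B.det ≤ ((A * B).trace / (n : ℝ)) ^ n := by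
  set S := CFC.sqrt A with hS
  have hSps := (CFC.sqrt_nonneg A).posSemidef
  have hC : (S * B * S).PosSemidef := by
    have := hB.mul_mul_conjTranspose_same S
    rwa [hSps.1.eq] at this
  have hdet : (S * B * S).det = A.det * B.det := by
    rw [Matrix.det_mul, Matrix.det_mul, ← CFC.sqrt_mul_sqrt_self A hA.nonneg, Matrix.det_mul]
    ring
  have htr : (S * B * S).trace = (A * B).trace := by
    rw [Matrix.trace_mul_cycle, hS, CFC.sqrt_mul_sqrt_self A hA.nonneg]
  calc A.det * B.det = (S * B * S).det := hdet.symm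
    _ ≤ ((S * B * S).trace / n) ^ n := det_le_trace_div_pow hn hC
    _ = ((A * B).trace / n) ^ n := by rw [htr]
end
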